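/- If f : ℝ → ℝ is 1-periodic, continuously differentiable, and ∫₀¹ f(x) dx = a₀/2, then for every ε > 0 and every x, f(x)² ≤ ((ε+2)/24) ∫₀¹ f'(y)² dy + ((ε+2)/(4ε)) a₀². -/

import Mathlib

lemma cauchy_schwarz_interval (g h : ℝ → ℝ) (hg : Continuous g) (hh : Continuous h) :
    (∫ y in (0:ℝ)..1, g y * h y) ^ 2
      ≤ (∫ y in (0:ℝ)..1, (g y) ^ 2) * (∫ y in (0:ℝ)..1, (h y) ^ 2) := by
  set A : ℝ := ∫ y in (0:ℝ)..1, (g y) ^ 2 with hA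
  set B : ℝ := ∫ y in (0:ℝ)..1, g y * h y with hB
  set C : ℝ := ∫ y in (0:ℝ)..1, (h y) ^ 2 with hC
  have key : ∀ t : ℝ, 0 ≤ A * (t * t) + (2 * B) * t + C := by
    intro t
    have h1 : (0:ℝ) ≤ ∫ y in (0:ℝ)..1, (t * g y + h y) ^ 2 :=
      intervalIntegral.integral_nonneg (by norm_num) (fun y _ => sq_nonneg _)
    have h2 : (∫ y in (0:ℝ)..1, (t * g y + h y) ^ 2)
        = A * (t * t) + (2 * B) * t + C := by
      have e : ∀ y : ℝ, (t * g y + h y) ^ 2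
          = (t * t) * (g y) ^ 2 + (2 * t) * (g y * h y) + (h y) ^ 2 := by
        intro y; ring
      simp only [e]
      rw [intervalIntegral.integral_add, intervalIntegral.integral_add,
        intervalIntegral.integral_const_mul, intervalIntegral.integral_const_mul]
      · ring
      · exact (((continuous_const.mul (hg.pow 2)))).intervalIntegrable _ _
      · exact ((continuous_const.mul (hg.mul hh))).intervalIntegrable _ _
      · exact (((continuous_const.mul (hg.pow 2))).add
          ((continuous_const.mul (hg.mul hh)))).intervalIntegrable _ _
      · exact ((hh.pow 2)).intervalIntegrable _ _
    linarith [h2 ▸ h1]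
  have hd := discrim_le_zero key
  rw [discrim] at hd
  nlinarith [hd]

lemma sq_sub_mean_le (f : ℝ → ℝ) (hf : ContDiff ℝ 1 f) (hper : Function.Periodic f 1) :
    (f 0 - ∫ x in (0:ℝ)..1, f x) ^ 2 ≤ (1 / 12) * ∫ y in (0:ℝ)..1, (deriv f y) ^ 2 := by
  have hdf : Continuous (deriv f) := hf.continuous_deriv le_rfl
  have hfc : Continuous f := hf.continuous
  have hf10 : f 1 = f 0 := by simpa using hper 0
  have hibp : ∫ y in (0:ℝ)..1, (y - 1/2) * deriv f y
      = f 0 - ∫ x in (0:ℝ)..1, f x := by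
    have h := intervalIntegral.integral_mul_deriv_eq_deriv_mul
      (a := (0:ℝ)) (b := 1)
      (u := fun y : ℝ => y - 1/2) (u' := fun _ : ℝ => (1:ℝ)) (v := f) (v' := deriv f)
      (fun y _ => ((hasDerivAt_id y).sub_const _))
      (fun y _ => (hf.differentiable one_ne_zero y).hasDerivAt)
      (continuous_const.intervalIntegrable 0 1)
      (hdf.intervalIntegrable 0 1)
    rw [h, hf10]
    simp only [one_mul]
    ring
  have hcs := cauchy_schwarz_interval (fun y => y - 1/2) (deriv f)
    (continuous_id.sub continuous_const) hdf
  have hgsq : (∫ y in (0:ℝ)..1, ((fun y : ℝ => y - 1/2) y) ^ 2) = 1 / 12 := by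
    simp only []
    have : ∀ y : ℝ, (y - 1/2) ^ 2 = y ^ 2 - y + 1/4 := by intro y; ring
    simp only [this]
    rw [intervalIntegral.integral_add, intervalIntegral.integral_sub]
    · rw [integral_pow, integral_id]
      norm_num
    · exact (continuous_pow 2).intervalIntegrable _ _
    · exact continuous_id.intervalIntegrable _ _
    · exact ((continuous_pow 2).sub continuous_id).intervalIntegrable _ _
    · exact continuous_const.intervalIntegrable _ _
  rw [← hibp]
  calc (∫ y in (0:ℝ)..1, (y - 1/2) * deriv f y) ^ 2
      ≤ (∫ y in (0:ℝ)..1, ((fun y : ℝ => y - 1/2) y) ^ 2)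
        * (∫ y in (0:ℝ)..1, (deriv f y) ^ 2) := hcs
    _ = (1 / 12) * ∫ y in (0:ℝ)..1, (deriv f y) ^ 2 := by rw [hgsq]

theorem sq_le_sobolev_type_bound
    (f : ℝ → ℝ) (a₀ : ℝ) (hf : ContDiff ℝ 1 f) (hper : Function.Periodic f 1)
    (hmean : ∫ x in (0:ℝ)..1, f x = a₀ / 2) :
    ∀ ε > (0:ℝ), ∀ x : ℝ,
      (f x) ^ 2 ≤ ((ε + 2) / 24) * (∫ y in (0:ℝ)..1, (deriv f y) ^ 2)
        + ((ε + 2) / (4 * ε)) * a₀ ^ 2 := by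
  intro ε hε x
  set g : ℝ → ℝ := fun y => f (x + y) with hg
  have hgC : ContDiff ℝ 1 g := hf.comp (contDiff_const.add contDiff_id)
  have hgper : Function.Periodic g 1 := by
    intro y; simp only [hg]; rw [← add_assoc]; exact hper (x + y)
  have hg0 : g 0 = f x := by simp [hg]
  have hderg : ∀ y, deriv g y = deriv f (x + y) := fun y => deriv_comp_const_add f x y
  -- mean of g equals mean of f
  have hgmean : (∫ y in (0:ℝ)..1, g y) = a₀ / 2 := by
    have h1 : (∫ y in (0:ℝ)..1, g y) = ∫ y in x..(x+1), f y := by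
      show (∫ y in (0:ℝ)..1, f (x + y)) = _
      rw [intervalIntegral.integral_comp_add_left f x, add_zero]
    have h2 := hper.intervalIntegral_add_eq x 0
    rw [h1]
    simpa [hmean] using h2
  -- integral of (deriv g)^2 equals integral of (deriv f)^2
  have hdper' : ∀ y : ℝ, deriv f (y + 1) = deriv f y := by
    intro y
    conv_rhs => rw [show f = (fun t => f (t + 1)) from funext fun t => (hper t).symm]
    rw [deriv_comp_add_const]
  have hdper : Function.Periodic (fun y => (deriv f y) ^ 2) 1 := by
    intro y; simp [hdper' y]
  have hgd : (∫ y in (0:ℝ)..1, (deriv g y) ^ 2) = ∫ y in (0:ℝ)..1, (deriv f y) ^ 2 := by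
    have h1 : (∫ y in (0:ℝ)..1, (deriv g y) ^ 2)
        = ∫ y in x..(x+1), (deriv f y) ^ 2 := by
      simp only [hderg]
      simpa using intervalIntegral.integral_comp_add_left (a := (0:ℝ)) (b := 1)
        (f := fun y => (deriv f y) ^ 2) x
    have h2 := hdper.intervalIntegral_add_eq x 0
    rw [h1]
    simpa using h2
  have hkey := sq_sub_mean_le g hgC hgper
  rw [hg0, hgmean, hgd] at hkey
  have hInonneg : (0:ℝ) ≤ ∫ y in (0:ℝ)..1, (deriv f y) ^ 2 :=
    intervalIntegral.integral_nonneg (by norm_num) (fun y _ => sq_nonneg _)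
  set I : ℝ := ∫ y in (0:ℝ)..1, (deriv f y) ^ 2
  set d : ℝ := f x - a₀ / 2 with hd
  have hfx : f x = d + a₀ / 2 := by rw [hd]; ring
  clear_value I d
  rw [hfx]
  have h1 : d ^ 2 ≤ (1/12) * I := hkey
  rw [← mul_le_mul_iff_right₀ hε]
  have expand : ε * (((ε + 2) / 24) * I + ((ε + 2) / (4 * ε)) * a₀ ^ 2)
      = ε * (ε + 2) / 24 * I + (ε + 2) / 4 * a₀ ^ 2 := by
    field_simp
  rw [expand]
  have h2 : ε * (ε + 2) * d ^ 2 ≤ ε * (ε + 2) * ((1/12) * I) :=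
    mul_le_mul_of_nonneg_left h1 (by positivity)
  have h3 : ε * d * a₀ ≤ (ε ^ 2 * d ^ 2 + a₀ ^ 2) / 2 := by
    nlinarith [sq_nonneg (ε * d - a₀)]
  nlinarith [h2, h3]
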